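/- Let H be a complex inner product space, let N ≥ 1, let (u_1, …, u_N) and (v_1, …, v_N) be orthonormal families in H, and let w_1, …, w_N lie in the linear span of {v_1, …, v_N} with ‖u_j − w_j‖ ≤ √(1 + 1/(2N)) − 1 for every j. Define the coefficient matrix M ∈ ℂ^{N×N} by the expansions w_j = Σ_{i=1}^N M_{ji} v_i. Then M is invertible, ‖M‖₂² ≤ 3/2, and ‖M⁻¹‖₂² ≤ 2. -/

import Mathlib

open Matrix

/-- The `ℓ²`-operator norm of a complex `N × N` matrix, i.e. the operator norm of the induced
linear map on the Euclidean space `ℂ^N`. -/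
noncomputable def l2OpNorm {N : ℕ} (M : Matrix (Fin N) (Fin N) ℂ) : ℝ :=
  ‖LinearMap.toContinuousLinearMap (Matrix.toEuclideanLin M)‖

open scoped Matrix.Norms.L2Operator in
lemma l2OpNorm_eq_norm {N : ℕ} (M : Matrix (Fin N) (Fin N) ℂ) : l2OpNorm M = ‖M‖ := rfl

open scoped Matrix.Norms.L2Operator in
lemma l2OpNorm_le_of_entries {N : ℕ} (A : Matrix (Fin N) (Fin N) ℂ) {c : ℝ}
    (hc : 0 ≤ c) (h : ∀ j m, ‖A j m‖ ≤ c) : ‖A‖ ≤ N * c := by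
  rw [Matrix.l2_opNorm_def]
  refine ContinuousLinearMap.opNorm_le_bound _ (by positivity) fun x => ?_
  set y := Matrix.toEuclideanLin A x with hy
  have hyj : ∀ j, y j = ∑ m, A j m * x m := fun j => rfl
  have h1 : ∀ j, ‖y j‖ ≤ c * ∑ m, ‖x m‖ := by
    intro j
    rw [hyj]
    calc ‖∑ m, A j m * x m‖ ≤ ∑ m, ‖A j m * x m‖ := norm_sum_le _ _
      _ ≤ ∑ m, c * ‖x m‖ := Finset.sum_le_sum fun m _ => by
          rw [norm_mul]; exact mul_le_mul_of_nonneg_right (h j m) (norm_nonneg _)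
      _ = c * ∑ m, ‖x m‖ := (Finset.mul_sum _ _ _).symm
  have hnx : ∑ m, ‖x m‖ ^ 2 = ‖x‖ ^ 2 := by
    rw [EuclideanSpace.norm_eq, Real.sq_sqrt (by positivity)]
  have hs : (∑ m, ‖x m‖) ^ 2 ≤ N * ‖x‖ ^ 2 := by
    calc (∑ m, ‖x m‖) ^ 2 ≤ (Finset.univ.card : ℝ) * ∑ m, ‖x m‖ ^ 2 :=
          sq_sum_le_card_mul_sum_sq
      _ = N * ‖x‖ ^ 2 := by rw [hnx, Finset.card_univ, Fintype.card_fin]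
  have h2 : ‖y‖ ^ 2 ≤ (N * c * ‖x‖) ^ 2 := by
    rw [EuclideanSpace.norm_eq, Real.sq_sqrt (by positivity)]
    calc ∑ j, ‖y j‖ ^ 2 ≤ ∑ _j : Fin N, (c * ∑ m, ‖x m‖) ^ 2 :=
          Finset.sum_le_sum fun j _ => pow_le_pow_left₀ (norm_nonneg _) (h1 j) 2
      _ = N * (c ^ 2 * (∑ m, ‖x m‖) ^ 2) := by
          rw [Finset.sum_const, Finset.card_univ, Fintype.card_fin, nsmul_eq_mul]; ring
      _ ≤ N * (c ^ 2 * (N * ‖x‖ ^ 2)) := by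
          have := mul_le_mul_of_nonneg_left hs (show (0:ℝ) ≤ c ^ 2 by positivity)
          exact mul_le_mul_of_nonneg_left this (by positivity)
      _ = (N * c * ‖x‖) ^ 2 := by ring
  exact le_of_pow_le_pow_left₀ two_ne_zero (by positivity) h2

open scoped Matrix.Norms.L2Operator in
/-- Let `H` be a complex inner product space, `N ≥ 1`, let `(u 1, …, u N)` and
`(v 1, …, v N)` be orthonormal families in `H`, and let `w 1, …, w N` lie in the linear span of
`{v 1, …, v N}` with `‖u j - w j‖ ≤ √(1 + 1/(2N)) - 1` for every `j`.  Define the coefficient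
matrix `M ∈ ℂ^{N×N}` by the expansions `w j = ∑ i, M j i • v i`.  Then `M` is invertible,
`‖M‖₂² ≤ 3/2`, and `‖M⁻¹‖₂² ≤ 2`. -/
theorem stmt4 {H : Type*} [NormedAddCommGroup H] [InnerProductSpace ℂ H]
    (N : ℕ) (hN : 1 ≤ N) (u v w : Fin N → H)
    (hu : Orthonormal ℂ u) (hv : Orthonormal ℂ v)
    (hspan : ∀ j, w j ∈ Submodule.span ℂ (Set.range v))
    (hw : ∀ j, ‖u j - w j‖ ≤ Real.sqrt (1 + 1 / (2 * N)) - 1)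
    (M : Matrix (Fin N) (Fin N) ℂ)
    (hM : ∀ j, w j = ∑ i, M j i • v i) :
    IsUnit M ∧ l2OpNorm M ^ 2 ≤ 3 / 2 ∧ l2OpNorm M⁻¹ ^ 2 ≤ 2 := by
  classical
  haveI : Nonempty (Fin N) := Fin.pos_iff_nonempty.mp hN
  haveI : CompleteSpace (Matrix (Fin N) (Fin N) ℂ) := FiniteDimensional.complete ℂ _
  have hNpos : (0:ℝ) < N := by exact_mod_cast hN
  set ε : ℝ := Real.sqrt (1 + 1 / (2 * N)) - 1 with hεdef
  have h2N : (0:ℝ) < 1 + 1 / (2 * N) := by positivity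
  have hsqrt : 1 + ε = Real.sqrt (1 + 1 / (2 * N)) := by rw [hεdef]; ring
  have hsq : (1 + ε) ^ 2 = 1 + 1 / (2 * N) := by
    rw [hsqrt, Real.sq_sqrt h2N.le]
  have hε0 : 0 ≤ ε := by
    have h1 : (1:ℝ) ≤ Real.sqrt (1 + 1 / (2 * N)) := by
      rw [Real.one_le_sqrt]
      have : (0:ℝ) ≤ 1 / (2 * N) := by positivity
      linarith
    rw [hεdef]
    linarith
  have hwn : ∀ j, ‖w j‖ ≤ 1 + ε := by
    intro j
    have : w j = u j - (u j - w j) := by abel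
    rw [this]
    calc ‖u j - (u j - w j)‖ ≤ ‖u j‖ + ‖u j - w j‖ := norm_sub_le _ _
      _ ≤ 1 + ε := by rw [hu.1 j]; exact add_le_add_right (hw j) 1
  -- entries of the Gram matrix
  have hMM : ∀ j m, (M * Mᴴ) j m = (inner ℂ (w m) (w j) : ℂ) := by
    intro j m
    rw [hM m, hM j, hv.inner_sum]
    rw [Matrix.mul_apply]
    exact Finset.sum_congr rfl fun i _ => by
      rw [Matrix.conjTranspose_apply]; simp [mul_comm, RCLike.star_def]
  have hone : ∀ j m, ((1 : Matrix (Fin N) (Fin N) ℂ)) j m = (inner ℂ (u m) (u j) : ℂ) := by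
    intro j m
    rw [orthonormal_iff_ite.mp hu m j, Matrix.one_apply]
    simp [eq_comm]
  have hent : ∀ j m, ‖(M * Mᴴ - 1) j m‖ ≤ 1 / (2 * N) := by
    intro j m
    have hid : (M * Mᴴ - 1) j m
        = (inner ℂ (w m - u m) (w j) : ℂ) + (inner ℂ (u m) (w j - u j) : ℂ) := by
      rw [Matrix.sub_apply, hMM, hone, inner_sub_left, inner_sub_right]
      ring
    rw [hid]
    have hb1 : ‖(inner ℂ (w m - u m) (w j) : ℂ)‖ ≤ ε * (1 + ε) := by
      calc ‖(inner ℂ (w m - u m) (w j) : ℂ)‖ ≤ ‖w m - u m‖ * ‖w j‖ :=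
            norm_inner_le_norm _ _
        _ ≤ ε * (1 + ε) := by
            have h1 : ‖w m - u m‖ ≤ ε := by rw [norm_sub_rev]; exact hw m
            exact mul_le_mul h1 (hwn j) (norm_nonneg _) hε0
    have hb2 : ‖(inner ℂ (u m) (w j - u j) : ℂ)‖ ≤ ε := by
      calc ‖(inner ℂ (u m) (w j - u j) : ℂ)‖ ≤ ‖u m‖ * ‖w j - u j‖ :=
            norm_inner_le_norm _ _
        _ = ‖u j - w j‖ := by rw [hu.1 m, one_mul, norm_sub_rev]
        _ ≤ ε := hw j
    calc ‖(inner ℂ (w m - u m) (w j) : ℂ) + (inner ℂ (u m) (w j - u j) : ℂ)‖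
        ≤ ‖(inner ℂ (w m - u m) (w j) : ℂ)‖ + ‖(inner ℂ (u m) (w j - u j) : ℂ)‖ :=
          norm_add_le _ _
      _ ≤ ε * (1 + ε) + ε := add_le_add hb1 hb2
      _ = (1 + ε) ^ 2 - 1 := by ring
      _ = 1 / (2 * N) := by rw [hsq]; ring
  -- operator norm bound on the defect
  have hD : ‖M * Mᴴ - 1‖ ≤ 1 / 2 := by
    have := l2OpNorm_le_of_entries (M * Mᴴ - 1) (by positivity) hent
    calc ‖M * Mᴴ - 1‖ ≤ N * (1 / (2 * N)) := this
      _ = 1 / 2 := by rw [mul_one_div, div_eq_iff (by positivity)]; ring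
  have hT : ‖(1 : Matrix (Fin N) (Fin N) ℂ) - M * Mᴴ‖ ≤ 1 / 2 := by
    rw [show (1 : Matrix (Fin N) (Fin N) ℂ) - M * Mᴴ = -(M * Mᴴ - 1) by abel, norm_neg]
    exact hD
  have hTlt : ‖(1 : Matrix (Fin N) (Fin N) ℂ) - M * Mᴴ‖ < 1 := lt_of_le_of_lt hT (by norm_num)
  -- unit
  have hBunit : IsUnit (M * Mᴴ) := by
    have := isUnit_one_sub_of_norm_lt_one hTlt
    rwa [sub_sub_cancel] at this
  have hMunit : IsUnit M := by
    have hdet : IsUnit ((M * Mᴴ).det) := (Matrix.isUnit_iff_isUnit_det _).mp hBunit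
    rw [Matrix.det_mul] at hdet
    exact (Matrix.isUnit_iff_isUnit_det M).mpr (isUnit_of_mul_isUnit_left hdet)
  -- norm of 1
  have hone1 : ‖(1 : Matrix (Fin N) (Fin N) ℂ)‖ = 1 := by
    have hcs : ‖(1 : Matrix (Fin N) (Fin N) ℂ)‖ * ‖(1 : Matrix (Fin N) (Fin N) ℂ)‖
        = ‖(1 : Matrix (Fin N) (Fin N) ℂ)‖ := by
      conv_rhs => rw [show (1 : Matrix (Fin N) (Fin N) ℂ) = 1ᴴ * 1 by simp]
      exact (CStarRing.norm_star_mul_self).symm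
    have h10 : (1 : Matrix (Fin N) (Fin N) ℂ) ≠ 0 := fun hcontra => by
      have := congrFun (congrFun hcontra ⟨0, hN⟩) ⟨0, hN⟩
      simp [Matrix.one_apply] at this
    have hne : ‖(1 : Matrix (Fin N) (Fin N) ℂ)‖ ≠ 0 := norm_ne_zero_iff.mpr h10
    exact mul_right_cancel₀ hne (hcs.trans (one_mul _).symm)
  refine ⟨hMunit, ?_, ?_⟩
  · -- ‖M‖² ≤ 3/2
    rw [l2OpNorm_eq_norm, sq]
    have : ‖M‖ * ‖M‖ = ‖M * Mᴴ‖ := (CStarRing.norm_self_mul_star (x := M)).symm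
    rw [this]
    calc ‖M * Mᴴ‖ = ‖(1 : Matrix (Fin N) (Fin N) ℂ) + (M * Mᴴ - 1)‖ := by
          rw [add_sub_cancel]
      _ ≤ ‖(1 : Matrix (Fin N) (Fin N) ℂ)‖ + ‖M * Mᴴ - 1‖ := norm_add_le _ _
      _ ≤ 1 + 1 / 2 := by rw [hone1]; exact add_le_add_right hD 1
      _ = 3 / 2 := by norm_num
  · -- ‖M⁻¹‖² ≤ 2
    rw [l2OpNorm_eq_norm, sq]
    have hstar : ‖M⁻¹‖ * ‖M⁻¹‖ = ‖(M * Mᴴ)⁻¹‖ := by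
      rw [← CStarRing.norm_star_mul_self (x := M⁻¹)]
      congr 1
      rw [Matrix.mul_inv_rev]
      rw [Matrix.star_eq_conjTranspose, Matrix.conjTranspose_nonsing_inv]
    rw [hstar]
    set t : Matrix (Fin N) (Fin N) ℂ := 1 - M * Mᴴ with ht
    have hinv : (M * Mᴴ)⁻¹ = Ring.inverse (1 - t) := by
      rw [Matrix.nonsing_inv_eq_ringInverse, ht, sub_sub_cancel]
    rw [hinv, ← geom_series_eq_inverse t hTlt]
    have hg : HasSum (fun n : ℕ => (1 / 2 : ℝ) ^ n) 2 := by
      convert hasSum_geometric_of_lt_one (r := (1/2 : ℝ)) (by norm_num) (by norm_num) using 1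
      norm_num
    refine tsum_of_norm_bounded hg ?_
    intro n
    match n with
    | 0 => simp [hone1]
    | (n+1) =>
      calc ‖t ^ (n+1)‖ ≤ ‖t‖ ^ (n+1) := norm_pow_le' t n.succ_pos
        _ ≤ (1 / 2) ^ (n+1) := pow_le_pow_left₀ (norm_nonneg _) hT _
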